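/- Let θ be a real number with |θ| ≤ 1/4. Then the sequence k ↦ θ^(k+1)·(2k+2)!/((k+1)!·(k+2)!) tends to 0 as k → ∞. -/

import Mathlib

lemma fact_two_mul_le (n : ℕ) :
    ((2 * n).factorial : ℝ) ≤ 4 ^ n * n.factorial * n.factorial := by
  have h1 : (2 * n).choose n ≤ 4 ^ n :=
    le_trans (Nat.choose_le_choose n (Nat.le_succ (2 * n))) (Nat.choose_middle_le_pow n)
  have h2 : (2 * n).choose n * n.factorial * (2 * n - n).factorial = (2 * n).factorial :=
    Nat.choose_mul_factorial_mul_factorial (by omega)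
  have h3 : 2 * n - n = n := by omega
  rw [h3] at h2
  have : (2 * n).factorial ≤ 4 ^ n * n.factorial * n.factorial := by
    rw [← h2]
    exact Nat.mul_le_mul_right _ (Nat.mul_le_mul_right _ h1)
  exact_mod_cast this

theorem stmt_15 (θ : ℝ) (hθ : |θ| ≤ 1 / 4) :
    Filter.Tendsto
      (fun k : ℕ => θ ^ (k + 1) * (Nat.factorial (2 * k + 2) : ℝ) /
        ((Nat.factorial (k + 1) : ℝ) * (Nat.factorial (k + 2) : ℝ)))
      Filter.atTop (nhds 0) := by
  have htend : Filter.Tendsto (fun k : ℕ => (1 : ℝ) / (k + 2)) Filter.atTop (nhds 0) := by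
    have := Filter.Tendsto.comp (tendsto_one_div_add_atTop_nhds_zero_nat (𝕜 := ℝ))
      (Filter.tendsto_add_atTop_nat 1)
    apply this.congr
    intro k
    simp [Function.comp]
    push_cast
    ring
  apply squeeze_zero_norm _ htend
  intro k
  set n := k + 1 with hn
  have hpos : (0:ℝ) < n.factorial := by positivity
  have hpos2 : (0:ℝ) < (n+1).factorial := by positivity
  have key : ((2 * n).factorial : ℝ) ≤ 4 ^ n * n.factorial * n.factorial := fact_two_mul_le n
  have h2k : 2 * k + 2 = 2 * n := by omega
  have hk2 : k + 2 = n + 1 := by omega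
  rw [h2k, hk2]
  have habs : |θ| ^ n ≤ (1/4 : ℝ) ^ n := pow_le_pow_left₀ (abs_nonneg θ) hθ n
  have hfacs : ((n+1).factorial : ℝ) = (n+1) * n.factorial := by
    exact_mod_cast Nat.factorial_succ n
  rw [norm_div, norm_mul]
  have hden : (0:ℝ) < ‖(n.factorial : ℝ) * ((n+1).factorial : ℝ)‖ := by
    rw [Real.norm_eq_abs, abs_of_nonneg (by positivity)]; positivity
  rw [div_le_iff₀ hden]
  calc ‖θ ^ n‖ * ‖((2*n).factorial : ℝ)‖
      ≤ (1/4:ℝ)^n * (4 ^ n * n.factorial * n.factorial) := by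
        rw [norm_pow]
        apply mul_le_mul habs _ (norm_nonneg _) (by positivity)
        rw [Real.norm_eq_abs, abs_of_nonneg (by positivity)]
        exact key
    _ = n.factorial * n.factorial := by
        have h4 : (4:ℝ)^n ≠ 0 := by positivity
        field_simp
        rw [← mul_pow]; norm_num
    _ ≤ 1 / (k + 2) * ‖(n.factorial : ℝ) * ((n+1).factorial : ℝ)‖ := by
        rw [Real.norm_eq_abs, abs_of_nonneg (by positivity), hfacs]
        have : ((k:ℝ) + 2) = (n+1 : ℝ) := by push_cast [hn]; ring
        rw [this]
        rw [one_div, ← mul_assoc]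
        rw [show ((n:ℝ)+1)⁻¹ * (n.factorial) * ((n+1) * n.factorial)
            = (((n:ℝ)+1)⁻¹ * ((n:ℝ)+1)) * (n.factorial * n.factorial) by ring]
        rw [inv_mul_cancel₀ (by positivity), one_mul]
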